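/- Let p and q be distinct odd primes such that q is a quadratic residue modulo p. Let A be a symmetric 2×2 integer matrix with det A = -p²·q, and suppose the quotient group ℤ²⧸A·ℤ² is isomorphic to ℤ/p ⊕ ℤ/p ⊕ ℤ/q. Then the linking form β_A restricted to the p-torsion subgroup of ℤ²⧸A·ℤ² is metabolic; concretely, there exists g ∈ ℤ² with g ∉ A·ℤ², p·g ∈ A·ℤ², and gᵀA⁻¹g ∈ ℤ. -/

import Mathlib

/-- Let `p` and `q` be distinct odd primes with `q` a quadratic residue
mod `p`, and let `A` be a symmetric `2 × 2` integer matrix with `det A = -p²q` and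
`ℤ²/A·ℤ² ≅ ℤ/p ⊕ ℤ/p ⊕ ℤ/q`. Then the linking form `β_A` restricted to the `p`-torsion
subgroup is metabolic: there exists `g ∈ ℤ²` with `g ∉ A·ℤ²`, `p·g ∈ A·ℤ²`, and
`gᵀA⁻¹g ∈ ℤ`. -/
theorem stmt_12 (p q : ℕ) [Fact p.Prime] [Fact q.Prime] (hp : Odd p) (hq : Odd q)
    (hpq : p ≠ q) (hres : ∃ c : ZMod p, c ≠ 0 ∧ c ^ 2 = (q : ZMod p))
    (A : Matrix (Fin 2) (Fin 2) ℤ) (hsymm : A.IsSymm)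
    (hdet : A.det = -((p : ℤ) ^ 2 * (q : ℤ)))
    (hiso : Nonempty
      (((Fin 2 → ℤ) ⧸ LinearMap.range (Matrix.mulVecLin A)) ≃+
        (ZMod p × ZMod p × ZMod q))) :
    ∃ g : Fin 2 → ℤ,
      (¬ ∃ y : Fin 2 → ℤ, g = A.mulVec y) ∧
      (∃ y : Fin 2 → ℤ, (p : ℤ) • g = A.mulVec y) ∧
      (∃ m : ℤ, dotProduct (fun i => (g i : ℚ))
          (((A.map ((↑) : ℤ → ℚ))⁻¹).mulVec (fun i => (g i : ℚ))) = (m : ℚ)) := by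
  obtain ⟨e⟩ := hiso
  have hpP : p.Prime := Fact.out
  have hqP : q.Prime := Fact.out
  have hp0 : ((p : ℤ)) ≠ 0 := by exact_mod_cast hpP.ne_zero
  have hq0 : ((q : ℤ)) ≠ 0 := by exact_mod_cast hqP.ne_zero
  have hpq0 : ((p : ℤ) * q) ≠ 0 := mul_ne_zero hp0 hq0
  have hp2 : (2:ℤ) ≤ (p:ℤ) := by exact_mod_cast hpP.two_le
  have hone : ¬ (p:ℤ) ∣ 1 := by
    intro h
    have := Int.le_of_dvd one_pos h
    omega
  -- Step 1: every element of the cokernel is killed by p*q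
  have key : ∀ x : Fin 2 → ℤ, ∃ y, ∀ i, (p : ℤ) * q * x i = A.mulVec y i := by
    intro x
    have h1 : ∀ z : ZMod p × ZMod p × ZMod q, (p * q) • z = 0 := by
      rintro ⟨a, b, c⟩
      refine Prod.ext ?_ (Prod.ext ?_ ?_) <;>
        simp [nsmul_eq_mul, Nat.cast_mul, ZMod.natCast_self]
    have h2 : ((p * q) • (Submodule.Quotient.mk x :
        (Fin 2 → ℤ) ⧸ LinearMap.range (Matrix.mulVecLin A))) = 0 := by
      apply e.injective
      rw [map_nsmul, map_zero]
      exact h1 _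
    have h3 : (Submodule.Quotient.mk ((p * q) • x) :
        (Fin 2 → ℤ) ⧸ LinearMap.range (Matrix.mulVecLin A)) = 0 := by
      rw [← h2]
      exact map_nsmul (LinearMap.range (Matrix.mulVecLin A)).mkQ (p * q) x
    rw [Submodule.Quotient.mk_eq_zero] at h3
    obtain ⟨y, hy⟩ := h3
    refine ⟨y, fun i => ?_⟩
    have := congrFun hy i
    rw [Matrix.mulVecLin_apply] at this
    rw [this, Pi.smul_apply, nsmul_eq_mul]
    push_cast
    ring
  -- Step 2: p divides every entry of A
  have hdvd : ∀ i j, (p : ℤ) ∣ A i j := by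
    have hdet2 : A 0 0 * A 1 1 - A 0 1 * A 1 0 = -((p:ℤ)^2 * q) := by
      rw [← Matrix.det_fin_two]; exact hdet
    obtain ⟨y, hy⟩ := key ![1, 0]
    obtain ⟨z, hz⟩ := key ![0, 1]
    have e0 := hy 0; have e1 := hy 1; have f0 := hz 0; have f1 := hz 1
    simp [Matrix.mulVec, dotProduct, Fin.sum_univ_two] at e0 e1 f0 f1
    have hd : A 1 1 = -(p:ℤ) * y 0 := by
      apply mul_right_cancel₀ hpq0
      linear_combination A 1 1 * e0 - A 0 1 * e1 + y 0 * hdet2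
    have hb' : A 1 0 = (p:ℤ) * y 1 := by
      apply mul_right_cancel₀ hpq0
      linear_combination A 1 0 * e0 - A 0 0 * e1 - y 1 * hdet2
    have hb : A 0 1 = (p:ℤ) * z 0 := by
      apply mul_right_cancel₀ hpq0
      linear_combination A 0 1 * f1 - A 1 1 * f0 - z 0 * hdet2
    have ha : A 0 0 = -(p:ℤ) * z 1 := by
      apply mul_right_cancel₀ hpq0
      linear_combination A 0 0 * f1 - A 1 0 * f0 + z 1 * hdet2
    intro i j
    fin_cases i <;> fin_cases j
    · exact ⟨-z 1, by show A 0 0 = _; rw [ha]; ring⟩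
    · exact ⟨z 0, by show A 0 1 = _; rw [hb]⟩
    · exact ⟨y 1, by show A 1 0 = _; rw [hb']⟩
    · exact ⟨-y 0, by show A 1 1 = _; rw [hd]; ring⟩
  -- Step 3: write A = p • A'
  obtain ⟨a', ha'⟩ := hdvd 0 0
  obtain ⟨b', hb'⟩ := hdvd 0 1
  obtain ⟨d', hd'⟩ := hdvd 1 1
  have hba : A 1 0 = A 0 1 := by
    have := congrFun (congrFun hsymm 0) 1
    simpa [Matrix.transpose_apply] using this
  set A' : Matrix (Fin 2) (Fin 2) ℤ := Matrix.of ![![a', b'], ![b', d']] with hA'def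
  have hA'00 : A' 0 0 = a' := rfl
  have hA'01 : A' 0 1 = b' := rfl
  have hA'10 : A' 1 0 = b' := rfl
  have hA'11 : A' 1 1 = d' := rfl
  have hA : A = (p : ℤ) • A' := by
    ext i j
    fin_cases i <;> fin_cases j <;>
      simp only [Matrix.smul_apply, smul_eq_mul, hA'00, hA'01, hA'10, hA'11]
    · exact ha'
    · exact hb'
    · show A 1 0 = _; rw [hba]; exact hb'
    · exact hd'
  have hdetA' : A'.det = -(q : ℤ) := by
    have h1 : A.det = (p:ℤ)^2 * A'.det := by
      rw [hA, Matrix.det_smul]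
      norm_num
    apply mul_left_cancel₀ (pow_ne_zero 2 hp0)
    rw [← h1, hdet]
    ring
  have hdetA'2 : a' * d' - b' * b' = -(q:ℤ) := by
    rw [← hdetA', Matrix.det_fin_two, hA'00, hA'01, hA'10, hA'11]
  -- Step 4: isotropic vector mod p
  obtain ⟨v, hvnd, hQ⟩ : ∃ v : Fin 2 → ℤ, (¬ ∀ i, (p:ℤ) ∣ v i) ∧
      (p:ℤ) ∣ (v 0 * (a' * v 0 + b' * v 1) + v 1 * (b' * v 0 + d' * v 1)) := by
    obtain ⟨c, hc0, hc2⟩ := hres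
    have hdp : (a' : ZMod p) * (d' : ZMod p) - (b' : ZMod p) * (b' : ZMod p)
        = -(c^2) := by
      rw [hc2]
      have : ((a' * d' - b' * b' : ℤ) : ZMod p) = ((-(q:ℤ) : ℤ) : ZMod p) := by
        exact_mod_cast congrArg _ hdetA'2
      push_cast at this
      exact this
    by_cases ha : (a' : ZMod p) = 0
    · refine ⟨![1, 0], ?_, ?_⟩
      · intro h; exact hone (h 0)
      · have : ((a' : ℤ) : ZMod p) = 0 := ha
        rw [ZMod.intCast_zmod_eq_zero_iff_dvd] at this
        have h2 : (1:ℤ) * (a' * 1 + b' * 0) + 0 * (b' * 1 + d' * 0) = a' := by ring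
        simpa [h2] using this
    · obtain ⟨x, hx⟩ : ∃ x : ZMod p, (a' : ZMod p) * x = c - (b' : ZMod p) :=
        ⟨(c - (b' : ZMod p)) * (a' : ZMod p)⁻¹, by field_simp⟩
      refine ⟨![(x.val : ℤ), 1], ?_, ?_⟩
      · intro h; exact hone (h 1)
      · rw [← ZMod.intCast_zmod_eq_zero_iff_dvd]
        have hxx : ((x.val : ℕ) : ZMod p) = x := by
          rw [ZMod.natCast_val, ZMod.cast_id]
        simp only [Matrix.cons_val_zero, Matrix.cons_val_one, Matrix.head_cons]
        push_cast
        rw [hxx]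
        apply mul_left_cancel₀ ha
        rw [mul_zero]
        linear_combination ((a' : ZMod p) * x + c + (b' : ZMod p)) * hx + hdp
  -- the candidate
  refine ⟨A'.mulVec v, ?_, ?_, ?_⟩
  · -- not in the image of A
    rintro ⟨z, hz⟩
    have hinj : v = (p:ℤ) • z := by
      have h1 : A'.mulVec (v - (p:ℤ) • z) = 0 := by
        rw [Matrix.mulVec_sub, Matrix.mulVec_smul, sub_eq_zero]
        calc A'.mulVec v = A.mulVec z := hz
          _ = ((p:ℤ) • A').mulVec z := by rw [hA]
          _ = (p:ℤ) • A'.mulVec z := Matrix.smul_mulVec _ _ _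
      have h2 : A'.det • (v - (p:ℤ) • z) = 0 := by
        calc A'.det • (v - (p:ℤ) • z)
            = (A'.det • (1 : Matrix (Fin 2) (Fin 2) ℤ)).mulVec (v - (p:ℤ) • z) := by
              rw [Matrix.smul_mulVec, Matrix.one_mulVec]
          _ = (A'.adjugate * A').mulVec (v - (p:ℤ) • z) := by rw [Matrix.adjugate_mul]
          _ = A'.adjugate.mulVec (A'.mulVec (v - (p:ℤ) • z)) := by
              rw [Matrix.mulVec_mulVec]
          _ = 0 := by rw [h1, Matrix.mulVec_zero]
      have h3 : v - (p:ℤ) • z = 0 := by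
        funext i
        have := congrFun h2 i
        rw [Pi.smul_apply, smul_eq_mul, hdetA'] at this
        have : -(q:ℤ) * (v - (p:ℤ) • z) i = 0 := this
        rcases mul_eq_zero.mp this with h | h
        · exact absurd h (by simpa using hq0)
        · exact h
      have := sub_eq_zero.mp h3
      exact this
    apply hvnd
    intro i
    rw [hinj]
    exact ⟨z i, by simp [mul_comm]⟩
  · -- p • g in the image of A
    exact ⟨v, by rw [hA, Matrix.smul_mulVec]⟩
  · -- integrality of the linking number
    obtain ⟨m, hm⟩ := hQ
    refine ⟨m, ?_⟩
    set Aq : Matrix (Fin 2) (Fin 2) ℚ := A'.map ((↑) : ℤ → ℚ) with hAq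
    set vq : Fin 2 → ℚ := fun i => (v i : ℚ) with hvq
    have hdetAq : Aq.det = -(q : ℚ) := by
      have h := congrArg (fun z : ℤ => (z : ℚ)) hdetA'2
      push_cast at h
      rw [hAq, Matrix.det_fin_two]
      simp only [Matrix.map_apply, hA'00, hA'01, hA'10, hA'11]
      exact h
    have hqQ : (q : ℚ) ≠ 0 := by exact_mod_cast hqP.ne_zero
    have hpQ : (p : ℚ) ≠ 0 := by exact_mod_cast hpP.ne_zero
    have hu : IsUnit Aq.det := by
      rw [hdetAq]
      exact isUnit_iff_ne_zero.mpr (neg_ne_zero.mpr hqQ)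
    have hgq : (fun i => ((A'.mulVec v) i : ℚ)) = Aq.mulVec vq := by
      funext i
      simp only [Matrix.mulVec, dotProduct, Fin.sum_univ_two, hAq,
        Matrix.map_apply, hvq]
      push_cast
      ring
    have hAmap : A.map ((↑) : ℤ → ℚ) = (p : ℚ) • Aq := by
      ext i j
      rw [hA]
      simp only [Matrix.map_apply, hAq, Matrix.smul_apply, smul_eq_mul]
      push_cast
      ring
    have hinv : (A.map ((↑) : ℤ → ℚ))⁻¹ = (p:ℚ)⁻¹ • Aq⁻¹ := by
      rw [hAmap]
      apply Matrix.inv_eq_right_inv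
      rw [Matrix.smul_mul, Matrix.mul_smul, Matrix.mul_nonsing_inv _ hu, smul_smul,
        mul_inv_cancel₀ hpQ, one_smul]
    have hmv : ((p:ℚ)⁻¹ • Aq⁻¹).mulVec (Aq.mulVec vq) = (p:ℚ)⁻¹ • vq := by
      rw [Matrix.smul_mulVec, Matrix.mulVec_mulVec,
        Matrix.nonsing_inv_mul _ hu, Matrix.one_mulVec]
    have hdot : dotProduct (Aq.mulVec vq) vq = (p:ℚ) * m := by
      have h := congrArg (fun z : ℤ => (z : ℚ)) hm
      push_cast at h
      simp only [dotProduct, Matrix.mulVec, Fin.sum_univ_two, hAq,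
        Matrix.map_apply, hvq, hA'00, hA'01, hA'10, hA'11]
      push_cast
      linear_combination h
    rw [hgq, hinv, hmv, dotProduct_smul, hdot, smul_eq_mul]
    field_simp
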